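/- Let R be an integral domain and C_* a finite free chain complex over the Laurent polynomial ring L_n = R[ℤⁿ], and let k ≥ 0, q > 0. Then there is a finite family of proper full subgroups G_1, …, G_s of Hom(ℤⁿ, ℤ) such that for every m ≥ 0 and every group homomorphism p : ℤⁿ → ℤᵐ, the condition b_k(C_*, p) ≥ b_k(C_*) + q holds if and only if p is subordinate to G_i for some i. -/

import Mathlib

set_option linter.unusedSectionVars false
set_option maxHeartbeats 1000000


set_option linter.unusedSectionVars false

open Matrix Module Submodule

variable {F : Type*} [Field F]

section RankMinors
variable {I J I' J' : Type*} [Fintype I] [Fintype J] [Fintype I'] [Fintype J']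

lemma aux_rank_submatrix_rows_le (M : Matrix I J F) (f : I' → I) :
    (M.submatrix f id).rank ≤ M.rank := by
  have h : (M.submatrix f id).mulVecLin = (LinearMap.funLeft F F f).comp M.mulVecLin := by
    ext v i'
    rfl
  rw [Matrix.rank, Matrix.rank, h, LinearMap.range_comp]
  exact Submodule.finrank_map_le _ _

lemma aux_rank_submatrix_cols_le (M : Matrix I J F) (g : J' → J) :
    (M.submatrix id g).rank ≤ M.rank := by
  classical
  apply Submodule.finrank_mono
  rintro x ⟨v, rfl⟩
  refine ⟨fun j => ∑ j', if g j' = j then v j' else 0, ?_⟩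
  show M.mulVec _ = (M.submatrix id g).mulVec v
  funext i
  show ∑ j, M i j * (∑ j', if g j' = j then v j' else 0) = ∑ j', M i (g j') * v j'
  simp only [Finset.mul_sum, mul_ite, mul_zero]
  rw [Finset.sum_comm]
  refine Finset.sum_congr rfl fun j' _ => ?_
  simp [Finset.sum_ite_eq]

lemma aux_rank_submatrix_le (M : Matrix I J F) (f : I' → I) (g : J' → J) :
    (M.submatrix f g).rank ≤ M.rank := by
  have h : M.submatrix f g = (M.submatrix f id).submatrix id g := rfl
  rw [h]
  exact (aux_rank_submatrix_cols_le _ g).trans (aux_rank_submatrix_rows_le M f)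

lemma aux_le_rank_of_minor {r : ℕ} (M : Matrix I J F) (f : Fin r → I) (g : Fin r → J)
    (h : (M.submatrix f g).det ≠ 0) : r ≤ M.rank := by
  have hu : IsUnit (M.submatrix f g) := by
    rw [Matrix.isUnit_iff_isUnit_det]
    exact isUnit_iff_ne_zero.mpr h
  have h2 := Matrix.rank_of_isUnit _ hu
  rw [Fintype.card_fin] at h2
  exact h2 ▸ aux_rank_submatrix_le M f g

lemma aux_exists_indep {V : Type*} [AddCommGroup V] [Module F V] {v : J → V} {r : ℕ}
    (h : r ≤ finrank F (span F (Set.range v))) :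
    ∃ g : Fin r → J, LinearIndependent F (v ∘ g) := by
  classical
  obtain ⟨b, hbsub, hbspan, hbind⟩ := exists_linearIndependent F (Set.range v)
  have hbfin : b.Finite := (Set.finite_range v).subset hbsub
  haveI := hbfin.fintype
  have hcard : finrank F (span F b) = b.toFinset.card := finrank_span_set_eq_card hbind
  have hr : r ≤ b.toFinset.card := by rw [← hcard, hbspan]; exact h
  have hcard2 : Fintype.card (Fin r) ≤ Fintype.card b := by
    simpa [Set.toFinset_card] using hr
  obtain ⟨e⟩ := Function.Embedding.nonempty_of_card_le hcard2
  have hind : LinearIndependent F (fun i : Fin r => ((e i : b) : V)) :=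
    hbind.comp e e.injective
  choose g hg using fun i : Fin r => hbsub (e i).2
  exact ⟨g, by
    convert hind using 1
    funext i
    exact hg i⟩

lemma aux_exists_minor {r : ℕ} {M : Matrix I J F} (h : r ≤ M.rank) :
    ∃ (f : Fin r → I) (g : Fin r → J), (M.submatrix f g).det ≠ 0 := by
  classical
  have h1 : r ≤ finrank F (span F (Set.range Mᵀ)) := by
    rw [Matrix.rank_eq_finrank_span_cols] at h; exact h
  obtain ⟨g, hg⟩ := aux_exists_indep h1
  set N : Matrix I (Fin r) F := M.submatrix id g with hN
  have hNt : Nᵀ = Mᵀ ∘ g := by funext j i; rfl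
  have hrankN : N.rank = r := by
    have h3 : Nᵀ.rank = r := by
      have := (hNt ▸ hg : LinearIndependent F Nᵀ).rank_matrix
      rw [Fintype.card_fin] at this; exact this
    rwa [Matrix.rank_transpose] at h3
  have h2 : r ≤ finrank F (span F (Set.range N)) := by
    have := Matrix.rank_eq_finrank_span_row N; rw [hrankN] at this; exact this.le
  obtain ⟨f, hf⟩ := aux_exists_indep h2
  refine ⟨f, g, ?_⟩
  have hsub : M.submatrix f g = N.submatrix f id := rfl
  rw [hsub]
  have hrows : LinearIndependent F (fun i => N.submatrix f id i) := hf
  have hu : IsUnit (N.submatrix f id) := Matrix.linearIndependent_rows_iff_isUnit.mp hrows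
  exact ((Matrix.isUnit_iff_isUnit_det _).mp hu).ne_zero

end RankMinors

set_option linter.unusedSectionVars false
open Matrix Module Submodule

section RankMap
variable {T F F₀ : Type*} [CommRing T] [Field F] [Field F₀]
variable {I J : Type*} [Fintype I] [Fintype J]

lemma aux_rank_map_iff (M : Matrix I J T) (φ : T →+* F) (r : ℕ) :
    r ≤ (M.map φ).rank ↔ ∃ (f : Fin r → I) (g : Fin r → J), φ (M.submatrix f g).det ≠ 0 := by
  constructor
  · intro h
    obtain ⟨f, g, hd⟩ := aux_exists_minor h
    refine ⟨f, g, ?_⟩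
    rwa [RingHom.map_det, RingHom.mapMatrix_apply, ← Matrix.submatrix_map]
  · rintro ⟨f, g, hd⟩
    apply aux_le_rank_of_minor (M.map φ) f g
    rwa [RingHom.map_det, RingHom.mapMatrix_apply, ← Matrix.submatrix_map] at hd

lemma aux_rank_map_le (M : Matrix I J T) (ι : T →+* F₀) (hι : Function.Injective ι)
    (φ : T →+* F) : (M.map φ).rank ≤ (M.map ι).rank := by
  rw [aux_rank_map_iff]
  obtain ⟨f, g, hd⟩ := (aux_rank_map_iff M φ _).mp le_rfl
  refine ⟨f, g, fun h => hd ?_⟩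
  have : (M.submatrix f g).det = 0 := by
    apply hι
    rw [h, map_zero]
  rw [this, map_zero]

end RankMap

section Collapse
variable {α β γ M : Type*} [AddCommMonoid M]

lemma aux_mapDomain_eval [DecidableEq α] [DecidableEq β] (f : α → β) (l : α →₀ M) (w : β) :
    Finsupp.mapDomain f l w = ∑ v ∈ l.support.filter (fun v => f v = w), l v := by
  rw [Finsupp.mapDomain, Finsupp.sum_apply]
  rw [Finsupp.sum]
  rw [Finset.sum_filter]
  refine Finset.sum_congr rfl fun v _ => ?_
  rw [Finsupp.single_apply]

lemma aux_collapse_transfer [DecidableEq α] [DecidableEq β] [DecidableEq γ]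
    (f : α → β) (f' : α → γ) (l : α →₀ M)
    (hsub : ∀ v ∈ l.support, ∀ w ∈ l.support, f v = f w → f' v = f' w)
    (h : Finsupp.mapDomain f l = 0) : Finsupp.mapDomain f' l = 0 := by
  ext w'
  rw [aux_mapDomain_eval, Finsupp.coe_zero, Pi.zero_apply]
  set s := l.support.filter (fun v => f' v = w') with hs
  rw [← Finset.sum_fiberwise_of_maps_to (g := f) (t := s.image f) (fun x hx => Finset.mem_image_of_mem f hx)]
  refine Finset.sum_eq_zero fun u hu => ?_
  obtain ⟨x₀, hx₀, hfx₀⟩ := Finset.mem_image.mp hu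
  have hfilter : s.filter (fun v => f v = u) = l.support.filter (fun v => f v = u) := by
    ext x
    simp only [Finset.mem_filter, hs]
    constructor
    · tauto
    · rintro ⟨hxs, hfx⟩
      obtain ⟨hx₀s, hfx₀'⟩ := Finset.mem_filter.mp hx₀
      refine ⟨⟨hxs, ?_⟩, hfx⟩
      rw [hsub x hxs x₀ hx₀s (by rw [hfx, hfx₀]), hfx₀']
  rw [hfilter, ← aux_mapDomain_eval, h, Finsupp.coe_zero, Pi.zero_apply]

lemma aux_exists_collision [DecidableEq α] [DecidableEq β] (f : α → β) (l : α →₀ M)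
    (hl : l ≠ 0) (h : Finsupp.mapDomain f l = 0) :
    ∃ v ∈ l.support, ∃ w ∈ l.support, v ≠ w ∧ f v = f w := by
  obtain ⟨v₀, hv₀⟩ := Finsupp.support_nonempty_iff.mpr hl
  by_contra hc
  push_neg at hc
  have hfilter : l.support.filter (fun v => f v = f v₀) = {v₀} := by
    ext x
    simp only [Finset.mem_filter, Finset.mem_singleton]
    constructor
    · rintro ⟨hx, hfx⟩
      by_contra hne
      exact hc x hx v₀ hv₀ hne hfx
    · rintro rfl
      exact ⟨hv₀, rfl⟩
  have := aux_mapDomain_eval f l (f v₀)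
  rw [h, Finsupp.coe_zero, Pi.zero_apply, hfilter, Finset.sum_singleton] at this
  exact Finsupp.mem_support_iff.mp hv₀ this.symm

set_option linter.unusedSectionVars false
open Module Submodule

variable {n : ℕ}

/-- The subgroup of homomorphisms equalizing all pairs in `D`. -/
def annSub (D : Finset ((Fin n → ℤ) × (Fin n → ℤ))) : AddSubgroup ((Fin n → ℤ) →+ ℤ) where
  carrier := {φ | ∀ vw ∈ D, φ vw.1 = φ vw.2}
  zero_mem' := fun vw _ => rfl
  add_mem' := by
    intro a b ha hb vw hvw
    simp only [AddMonoidHom.add_apply, ha vw hvw, hb vw hvw]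
  neg_mem' := by
    intro a ha vw hvw
    simp only [AddMonoidHom.neg_apply, ha vw hvw]

lemma mem_annSub {D : Finset ((Fin n → ℤ) × (Fin n → ℤ))} {φ : (Fin n → ℤ) →+ ℤ} :
    φ ∈ annSub D ↔ ∀ vw ∈ D, φ vw.1 = φ vw.2 := Iff.rfl

lemma annSub_exists_isCompl (D : Finset ((Fin n → ℤ) × (Fin n → ℤ))) :
    ∃ K, IsCompl (annSub D) K := by
  classical
  haveI : Module.Finite ℤ ((Fin n → ℤ) →+ ℤ) :=
    Module.Finite.equiv (addMonoidHomLequivInt (A := Fin n → ℤ) (B := ℤ) ℤ).symm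
  haveI : Module.Free ℤ ((Fin n → ℤ) →+ ℤ) :=
    Module.Free.of_equiv (addMonoidHomLequivInt (A := Fin n → ℤ) (B := ℤ) ℤ).symm
  set S : Submodule ℤ ((Fin n → ℤ) →+ ℤ) := AddSubgroup.toIntSubmodule (annSub D) with hS
  haveI : NoZeroSMulDivisors ℤ (((Fin n → ℤ) →+ ℤ) ⧸ S) := by
    refine ⟨fun {c x} hcx => ?_⟩
    obtain ⟨y, rfl⟩ := Submodule.Quotient.mk_surjective S x
    by_cases hc : c = 0
    · exact Or.inl hc
    · right
      rw [← Submodule.Quotient.mk_smul, Submodule.Quotient.mk_eq_zero] at hcx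
      rw [Submodule.Quotient.mk_eq_zero]
      have hmem' : c • y ∈ annSub D := hcx
      show y ∈ annSub D
      intro vw hvw
      have h1 : y vw.1 = y vw.2 ∨ c = 0 := by simpa using hmem' vw hvw
      exact h1.resolve_right hc
  haveI : Module.Free ℤ (((Fin n → ℤ) →+ ℤ) ⧸ S) := Module.free_of_finite_type_torsion_free'
  obtain ⟨g, hg⟩ := Module.projective_lifting_property S.mkQ (LinearMap.id : ((((Fin n → ℤ) →+ ℤ)) ⧸ S) →ₗ[ℤ] ((((Fin n → ℤ) →+ ℤ)) ⧸ S))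
    (Submodule.Quotient.mk_surjective S)
  have hmem : ∀ x : (Fin n → ℤ) →+ ℤ, x - g (S.mkQ x) ∈ S := by
    intro x
    rw [← Submodule.Quotient.mk_eq_zero (p := S)]
    have : S.mkQ (x - g (S.mkQ x)) = S.mkQ x - S.mkQ (g (S.mkQ x)) := by rw [map_sub]
    rw [← Submodule.mkQ_apply, this]
    have := LinearMap.congr_fun hg (S.mkQ x)
    simp only [LinearMap.comp_apply, LinearMap.id_apply] at this
    rw [this, sub_self]
  let π : ((Fin n → ℤ) →+ ℤ) →ₗ[ℤ] S := LinearMap.codRestrict S (LinearMap.id - g ∘ₗ S.mkQ) (by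
    intro x
    simpa using hmem x)
  have hproj : ∀ x : S, π x = x := by
    rintro ⟨x, hx⟩
    apply Subtype.ext
    have hzero : S.mkQ x = 0 := (Submodule.Quotient.mk_eq_zero _).mpr hx
    simp only [π, LinearMap.codRestrict_apply, LinearMap.sub_apply, LinearMap.id_apply,
      LinearMap.comp_apply, hzero, map_zero, sub_zero]
  have hcompl : IsCompl S (LinearMap.ker π) := LinearMap.isCompl_of_proj hproj
  refine ⟨(AddSubgroup.toIntSubmodule (M := (Fin n → ℤ) →+ ℤ)).symm (LinearMap.ker π), ?_⟩
  have h2 := (AddSubgroup.toIntSubmodule (M := (Fin n → ℤ) →+ ℤ)).symm.isCompl hcompl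
  have h3 : (AddSubgroup.toIntSubmodule (M := (Fin n → ℤ) →+ ℤ)).symm S = annSub D :=
    OrderIso.symm_apply_apply _ _
  rwa [h3] at h2



lemma aux_rank_fin_zero {F : Type*} [CommRing F] [Nontrivial F] (M : Matrix (Fin 0) (Fin 0) F) : M.rank = 0 := by
  rw [Matrix.rank]
  haveI : Subsingleton (LinearMap.range M.mulVecLin) :=
    ⟨fun a b => Subtype.ext (Subsingleton.elim (α := Fin 0 → F) a.1 b.1)⟩
  exact Module.finrank_zero_of_subsingleton

/-- A finite free chain complex `0 ← C_0 ← C_1 ← ⋯ ← C_N ← 0` over a ring `T`,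
recorded by the ranks `c k` of its finitely generated free chain modules and the
matrices of its boundary operators; `d k` is the matrix of `∂_{k+1} : C_{k+1} → C_k`. -/
structure FinFreeChainComplex (T : Type) [Ring T] where
  N : ℕ
  c : ℕ → ℕ
  bounded : ∀ k : ℕ, N < k → c k = 0
  d : ∀ k : ℕ, Matrix (Fin (c k)) (Fin (c (k + 1))) T
  dsq : ∀ k : ℕ, d k * d (k + 1) = 0

/-- The rank, over the fraction field `{U}` of `U`, of the matrix of `∂_{k+1}`
with entries mapped by the ring homomorphism `φ : T →+* U`. -/
noncomputable def FinFreeChainComplex.bdryRank {T U : Type} [Ring T] [CommRing U]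
    (C : FinFreeChainComplex T) (φ : T →+* U) (k : ℕ) : ℕ :=
  ((C.d k).map ⇑((algebraMap U (FractionRing U)).comp φ)).rank

/-- The rank, over `{U}`, of the matrix of `∂_k : C_k → C_{k-1}` (with `∂_0 = 0`)
with entries mapped by `φ`. -/
noncomputable def FinFreeChainComplex.bdryRankAt {T U : Type} [Ring T] [CommRing U]
    (C : FinFreeChainComplex T) (φ : T →+* U) (k : ℕ) : ℕ :=
  match k with
  | 0 => 0
  | k' + 1 => C.bdryRank φ k'

/-- `b_k(C_*, φ) = dim_{{U}} H_k(C_* ⊗_φ {U}) = c_k − rk φ(∂_k) − rk φ(∂_{k+1})`. -/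
noncomputable def FinFreeChainComplex.bettiMap {T U : Type} [Ring T] [CommRing U]
    (C : FinFreeChainComplex T) (φ : T →+* U) (k : ℕ) : ℕ :=
  C.c k - C.bdryRankAt φ k - C.bdryRank φ k

/-- `b_k(C_*) = dim_{{T}} H_k(C_* ⊗_T {T})`. -/
noncomputable def FinFreeChainComplex.betti {T : Type} [CommRing T]
    (C : FinFreeChainComplex T) (k : ℕ) : ℕ :=
  C.bettiMap (RingHom.id T) k


/-- `p : ℤⁿ → ℤᵐ` is subordinate to a subgroup `G ⊆ Hom(ℤⁿ, ℤ)` if all the coordinate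
homomorphisms of `p` belong to `G`. -/
def Subordinate {n m : ℕ} (p : (Fin n → ℤ) →+ (Fin m → ℤ))
    (G : AddSubgroup ((Fin n → ℤ) →+ ℤ)) : Prop :=
  ∀ j : Fin m, (Pi.evalAddMonoidHom (fun _ : Fin m => ℤ) j).comp p ∈ G


set_option linter.unusedSectionVars false
set_option maxHeartbeats 1000000


section Main
variable {R : Type} [CommRing R] [IsDomain R]

lemma aux_isDomain (m : ℕ) : IsDomain (AddMonoidAlgebra R (Fin m → ℤ)) :=
  NoZeroDivisors.to_isDomain _

lemma aux_mapDomainRingHom_eq {n m : ℕ} (p : (Fin n → ℤ) →+ (Fin m → ℤ))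
    (h : AddMonoidAlgebra R (Fin n → ℤ)) :
    AddMonoidAlgebra.mapDomainRingHom R p h = AddMonoidAlgebra.ofCoeff (Finsupp.mapDomain ⇑p h.coeff) := by
  rfl

lemma aux_psi_zero_iff {n m : ℕ} (p : (Fin n → ℤ) →+ (Fin m → ℤ))
    (h : AddMonoidAlgebra R (Fin n → ℤ)) :
    ((algebraMap (AddMonoidAlgebra R (Fin m → ℤ))
        (FractionRing (AddMonoidAlgebra R (Fin m → ℤ)))).comp
      (AddMonoidAlgebra.mapDomainRingHom R p)) h = 0 ↔ Finsupp.mapDomain ⇑p h.coeff = 0 := by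
  haveI := aux_isDomain (R := R) m
  rw [RingHom.comp_apply]
  constructor
  · intro h0
    have hinj : Function.Injective (algebraMap (AddMonoidAlgebra R (Fin m → ℤ))
        (FractionRing (AddMonoidAlgebra R (Fin m → ℤ)))) := IsFractionRing.injective _ _
    have h1 : AddMonoidAlgebra.mapDomainRingHom R p h = 0 := by
      apply hinj
      rw [h0, map_zero]
    rwa [aux_mapDomainRingHom_eq, AddMonoidAlgebra.ofCoeff_eq_zero] at h1
  · intro h0
    rw [aux_mapDomainRingHom_eq, h0, AddMonoidAlgebra.ofCoeff_zero, map_zero]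

lemma aux_iota_injective (n : ℕ) :
    Function.Injective ⇑((algebraMap (AddMonoidAlgebra R (Fin n → ℤ))
      (FractionRing (AddMonoidAlgebra R (Fin n → ℤ)))).comp
      (RingHom.id (AddMonoidAlgebra R (Fin n → ℤ)))) := by
  haveI := aux_isDomain (R := R) n
  rw [RingHom.comp_id]
  exact IsFractionRing.injective _ _

theorem aux_main {n : ℕ} {α β γ δ : ℕ}
    (M₁ : Matrix (Fin α) (Fin β) (AddMonoidAlgebra R (Fin n → ℤ)))
    (M₂ : Matrix (Fin γ) (Fin δ) (AddMonoidAlgebra R (Fin n → ℤ)))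
    (q : ℕ) (hq : 0 < q) :
    ∃ (s : ℕ) (Gs : Fin s → AddSubgroup ((Fin n → ℤ) →+ ℤ)),
      (∀ i, (∃ K, IsCompl (Gs i) K) ∧ Gs i ≠ ⊤) ∧
      ∀ (m : ℕ) (p : (Fin n → ℤ) →+ (Fin m → ℤ)),
        ((M₁.map ⇑((algebraMap (AddMonoidAlgebra R (Fin m → ℤ))
              (FractionRing (AddMonoidAlgebra R (Fin m → ℤ)))).comp
              (AddMonoidAlgebra.mapDomainRingHom R p))).rank
          + (M₂.map ⇑((algebraMap (AddMonoidAlgebra R (Fin m → ℤ))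
              (FractionRing (AddMonoidAlgebra R (Fin m → ℤ)))).comp
              (AddMonoidAlgebra.mapDomainRingHom R p))).rank + q
          ≤ (M₁.map ⇑((algebraMap (AddMonoidAlgebra R (Fin n → ℤ))
              (FractionRing (AddMonoidAlgebra R (Fin n → ℤ)))).comp
              (RingHom.id (AddMonoidAlgebra R (Fin n → ℤ))))).rank
            + (M₂.map ⇑((algebraMap (AddMonoidAlgebra R (Fin n → ℤ))
              (FractionRing (AddMonoidAlgebra R (Fin n → ℤ)))).comp
              (RingHom.id (AddMonoidAlgebra R (Fin n → ℤ))))).rank) ↔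
          ∃ i, Subordinate p (Gs i) := by
  classical
  haveI : IsDomain (AddMonoidAlgebra R (Fin n → ℤ)) := aux_isDomain n
  let ι : AddMonoidAlgebra R (Fin n → ℤ) →+* FractionRing (AddMonoidAlgebra R (Fin n → ℤ)) :=
    (algebraMap (AddMonoidAlgebra R (Fin n → ℤ))
      (FractionRing (AddMonoidAlgebra R (Fin n → ℤ)))).comp
      (RingHom.id (AddMonoidAlgebra R (Fin n → ℤ)))
  let ψ : ∀ m : ℕ, ((Fin n → ℤ) →+ (Fin m → ℤ)) →
      (AddMonoidAlgebra R (Fin n → ℤ) →+* FractionRing (AddMonoidAlgebra R (Fin m → ℤ))) :=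
    fun m p => (algebraMap (AddMonoidAlgebra R (Fin m → ℤ))
        (FractionRing (AddMonoidAlgebra R (Fin m → ℤ)))).comp
      (AddMonoidAlgebra.mapDomainRingHom R p)
  set A := (M₁.map ⇑ι).rank with hA
  set B := (M₂.map ⇑ι).rank with hB
  by_cases hqAB : A + B < q
  · refine ⟨0, Fin.elim0, fun i => i.elim0, fun m p => ?_⟩
    constructor
    · intro hle
      omega
    · rintro ⟨i, -⟩
      exact i.elim0
  push_neg at hqAB
  set r := A + B + 1 - q with hr
  set polys : Finset (AddMonoidAlgebra R (Fin n → ℤ)) :=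
    (Finset.range (r + 1)).biUnion (fun a =>
      Finset.image (fun x : ((Fin a → Fin α) × (Fin a → Fin β)) ×
          ((Fin (r - a) → Fin γ) × (Fin (r - a) → Fin δ)) =>
        (M₁.submatrix x.1.1 x.1.2).det * (M₂.submatrix x.2.1 x.2.2).det) Finset.univ) with hpolys
  set V : Finset (Fin n → ℤ) := polys.biUnion (fun h => h.coeff.support) with hV
  set Kill : ∀ m : ℕ, ((Fin n → ℤ) →+ (Fin m → ℤ)) → Prop := fun m p =>
    ∀ h ∈ polys, Finsupp.mapDomain ⇑p h.coeff = (0 : (Fin m → ℤ) →₀ R) with hKill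
  have hJumpIff : ∀ (m : ℕ) (p : (Fin n → ℤ) →+ (Fin m → ℤ)),
      ((M₁.map ⇑(ψ m p)).rank + (M₂.map ⇑(ψ m p)).rank + q ≤ A + B) ↔ Kill m p := by
    intro m p
    haveI : IsDomain (AddMonoidAlgebra R (Fin m → ℤ)) := aux_isDomain m
    constructor
    · intro hle h hmem
      rw [hpolys] at hmem
      obtain ⟨a, har, hmem2⟩ := Finset.mem_biUnion.mp hmem
      obtain ⟨x, -, hx⟩ := Finset.mem_image.mp hmem2
      have har' : a ≤ r := Nat.lt_succ_iff.mp (Finset.mem_range.mp har)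
      by_contra hne0
      have hψ : (ψ m p) h ≠ 0 := fun h0 => hne0 ((aux_psi_zero_iff p h).mp h0)
      rw [← hx, _root_.map_mul] at hψ
      have h1 := left_ne_zero_of_mul hψ
      have h2 := right_ne_zero_of_mul hψ
      have ha1 : a ≤ (M₁.map ⇑(ψ m p)).rank :=
        (aux_rank_map_iff M₁ (ψ m p) a).mpr ⟨x.1.1, x.1.2, h1⟩
      have ha2 : r - a ≤ (M₂.map ⇑(ψ m p)).rank :=
        (aux_rank_map_iff M₂ (ψ m p) (r - a)).mpr ⟨x.2.1, x.2.2, h2⟩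
      omega
    · intro hkill
      by_contra hgt
      push_neg at hgt
      obtain ⟨a, ha, hb, har'⟩ : ∃ a, a ≤ (M₁.map ⇑(ψ m p)).rank ∧
          r - a ≤ (M₂.map ⇑(ψ m p)).rank ∧ a ≤ r := by
        rcases le_total ((M₁.map ⇑(ψ m p)).rank) r with hc | hc
        · exact ⟨(M₁.map ⇑(ψ m p)).rank, le_rfl, by omega, hc⟩
        · exact ⟨r, hc, by omega, le_rfl⟩
      obtain ⟨f, g, h1⟩ := (aux_rank_map_iff M₁ (ψ m p) a).mp ha
      obtain ⟨f', g', h2⟩ := (aux_rank_map_iff M₂ (ψ m p) (r - a)).mp hb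
      have hmem : (M₁.submatrix f g).det * (M₂.submatrix f' g').det ∈ polys := by
        rw [hpolys]
        refine Finset.mem_biUnion.mpr ⟨a, Finset.mem_range.mpr (by omega), ?_⟩
        exact Finset.mem_image.mpr ⟨⟨⟨f, g⟩, ⟨f', g'⟩⟩, Finset.mem_univ _, rfl⟩
      have h0 := hkill _ hmem
      have hψ0 := (aux_psi_zero_iff p _).mpr h0
      rw [_root_.map_mul] at hψ0
      rcases mul_eq_zero.mp hψ0 with h' | h'
      exacts [h1 h', h2 h']
  have hProper : ∀ (m : ℕ) (p : (Fin n → ℤ) →+ (Fin m → ℤ)), Kill m p →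
      ∃ v ∈ V, ∃ w ∈ V, v ≠ w ∧ p v = p w := by
    intro m p hkill
    obtain ⟨a, ha, hb, har'⟩ : ∃ a, a ≤ A ∧ r - a ≤ B ∧ a ≤ r := by
      rcases le_total A r with hc | hc
      · exact ⟨A, le_rfl, by omega, hc⟩
      · exact ⟨r, hc, by omega, le_rfl⟩
    obtain ⟨f, g, h1⟩ := (aux_rank_map_iff M₁ ι a).mp (hA ▸ ha)
    obtain ⟨f', g', h2⟩ := (aux_rank_map_iff M₂ ι (r - a)).mp (hB ▸ hb)
    have hd1 : (M₁.submatrix f g).det ≠ 0 := fun h0 => h1 (by rw [h0, map_zero])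
    have hd2 : (M₂.submatrix f' g').det ≠ 0 := fun h0 => h2 (by rw [h0, map_zero])
    have hprod : (M₁.submatrix f g).det * (M₂.submatrix f' g').det ≠ 0 := mul_ne_zero hd1 hd2
    have hmem : (M₁.submatrix f g).det * (M₂.submatrix f' g').det ∈ polys := by
      rw [hpolys]
      refine Finset.mem_biUnion.mpr ⟨a, Finset.mem_range.mpr (by omega), ?_⟩
      exact Finset.mem_image.mpr ⟨⟨⟨f, g⟩, ⟨f', g'⟩⟩, Finset.mem_univ _, rfl⟩
    obtain ⟨v, hv, w, hw, hne, heq⟩ := aux_exists_collision ⇑p _ (fun h0 => hprod (AddMonoidAlgebra.coeff_eq_zero.mp h0)) (hkill _ hmem)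
    refine ⟨v, ?_, w, ?_, hne, heq⟩
    · rw [hV]; exact Finset.mem_biUnion.mpr ⟨_, hmem, hv⟩
    · rw [hV]; exact Finset.mem_biUnion.mpr ⟨_, hmem, hw⟩
  have hTransfer : ∀ (m : ℕ) (p : (Fin n → ℤ) →+ (Fin m → ℤ))
      (m' : ℕ) (p' : (Fin n → ℤ) →+ (Fin m' → ℤ)),
      Kill m p → (∀ v ∈ V, ∀ w ∈ V, p v = p w → p' v = p' w) → Kill m' p' := by
    intro m p m' p' hkill hvw h hmem
    refine aux_collapse_transfer ⇑p ⇑p' h.coeff (fun v hv w hw hpv => hvw v ?_ w ?_ hpv) (hkill h hmem)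
    · rw [hV]; exact Finset.mem_biUnion.mpr ⟨h, hmem, hv⟩
    · rw [hV]; exact Finset.mem_biUnion.mpr ⟨h, hmem, hw⟩
  set 𝒢 : Finset (Finset ((Fin n → ℤ) × (Fin n → ℤ))) :=
    (V ×ˢ V).powerset.filter (fun D => annSub D ≠ ⊤ ∧
      ∀ (m : ℕ) (p' : (Fin n → ℤ) →+ (Fin m → ℤ)), Subordinate p' (annSub D) → Kill m p')
    with h𝒢
  refine ⟨𝒢.card, fun i => annSub (𝒢.equivFin.symm i).1, fun i => ?_, fun m p => ?_⟩
  · exact ⟨annSub_exists_isCompl _, (Finset.mem_filter.mp (𝒢.equivFin.symm i).2).2.1⟩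
  · show ((M₁.map ⇑(ψ m p)).rank + (M₂.map ⇑(ψ m p)).rank + q ≤ A + B) ↔ _
    rw [hJumpIff m p]
    constructor
    · intro hkill
      set D : Finset ((Fin n → ℤ) × (Fin n → ℤ)) :=
        (V ×ˢ V).filter (fun vw => p vw.1 = p vw.2) with hD
      have hDmem : D ∈ 𝒢 := by
        refine Finset.mem_filter.mpr ⟨Finset.mem_powerset.mpr (Finset.filter_subset _ _), ?_, ?_⟩
        · obtain ⟨v, hv, w, hw, hne, heq⟩ := hProper m p hkill
          obtain ⟨j, hj⟩ := Function.ne_iff.mp hne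
          intro htop
          have hmemD : (v, w) ∈ D := by
            rw [hD]; exact Finset.mem_filter.mpr ⟨Finset.mem_product.mpr ⟨hv, hw⟩, heq⟩
          have hφ : (Pi.evalAddMonoidHom (fun _ : Fin n => ℤ) j) ∈ annSub D :=
            htop ▸ AddSubgroup.mem_top _
          exact hj (hφ (v, w) hmemD)
        · intro m' p' hsub
          refine hTransfer m p m' p' hkill ?_
          intro v hv w hw hpvw
          funext j
          exact hsub j (v, w)
            (by rw [hD]; exact Finset.mem_filter.mpr ⟨Finset.mem_product.mpr ⟨hv, hw⟩, hpvw⟩)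
      refine ⟨𝒢.equivFin ⟨D, hDmem⟩, ?_⟩
      show Subordinate p (annSub ((𝒢.equivFin.symm (𝒢.equivFin ⟨D, hDmem⟩)) : Finset _))
      rw [Equiv.symm_apply_apply]
      intro j
      refine mem_annSub.mpr ?_
      intro vw hvw
      have hvw' : vw ∈ (V ×ˢ V).filter (fun vw => p vw.1 = p vw.2) := hvw
      have hp := (Finset.mem_filter.mp hvw').2
      show p vw.1 j = p vw.2 j
      rw [hp]
    · rintro ⟨i, hsub⟩
      exact (Finset.mem_filter.mp (𝒢.equivFin.symm i).2).2.2 m p hsub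

end Main


/-- let `C_*` be a finite free chain complex over `L_n = R[ℤⁿ]`, `R` an
integral domain, and `k ≥ 0`, `q > 0`. Then there is a finite family of proper full
subgroups `G_1, …, G_s` of `Hom(ℤⁿ, ℤ)` such that for every `m` and every
`p : ℤⁿ → ℤᵐ`, one has `b_k(C_*, p) ≥ b_k(C_*) + q` iff `p` is subordinate to some
`G_i`. -/
theorem exists_jump_subgroups {R : Type} [CommRing R] [IsDomain R] {n : ℕ}
    (C : FinFreeChainComplex (AddMonoidAlgebra R (Fin n → ℤ)))
    (k : ℕ) (q : ℕ) (hq : 0 < q) :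
    ∃ (s : ℕ) (Gs : Fin s → AddSubgroup ((Fin n → ℤ) →+ ℤ)),
      (∀ i, (∃ K, IsCompl (Gs i) K) ∧ Gs i ≠ ⊤) ∧
      ∀ (m : ℕ) (p : (Fin n → ℤ) →+ (Fin m → ℤ)),
        C.betti k + q ≤ C.bettiMap (AddMonoidAlgebra.mapDomainRingHom R p) k ↔
          ∃ i, Subordinate p (Gs i) := by
  classical
  haveI : IsDomain (AddMonoidAlgebra R (Fin n → ℤ)) := aux_isDomain n
  cases k with
  | zero =>
    obtain ⟨s, Gs, hfull, hiff⟩ := aux_main (R := R) (n := n)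
      (0 : Matrix (Fin 0) (Fin 0) (AddMonoidAlgebra R (Fin n → ℤ))) (C.d 0) q hq
    refine ⟨s, Gs, hfull, fun m p => ?_⟩
    haveI : IsDomain (AddMonoidAlgebra R (Fin m → ℤ)) := aux_isDomain m
    rw [← hiff m p]
    have h0ψ : ((0 : Matrix (Fin 0) (Fin 0) (AddMonoidAlgebra R (Fin n → ℤ))).map
        ⇑((algebraMap (AddMonoidAlgebra R (Fin m → ℤ))
          (FractionRing (AddMonoidAlgebra R (Fin m → ℤ)))).comp
          (AddMonoidAlgebra.mapDomainRingHom R p))).rank = 0 := aux_rank_fin_zero _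
    have h0ι : ((0 : Matrix (Fin 0) (Fin 0) (AddMonoidAlgebra R (Fin n → ℤ))).map
        ⇑((algebraMap (AddMonoidAlgebra R (Fin n → ℤ))
          (FractionRing (AddMonoidAlgebra R (Fin n → ℤ)))).comp
          (RingHom.id (AddMonoidAlgebra R (Fin n → ℤ))))).rank = 0 := aux_rank_fin_zero _
    rw [h0ψ, h0ι]
    have hle1 : C.bdryRank (RingHom.id (AddMonoidAlgebra R (Fin n → ℤ))) 0 ≤ C.c 0 := by
      show ((C.d 0).map _).rank ≤ C.c 0
      exact (Matrix.rank_le_card_height _).trans (by simp)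
    have hle2 : C.bdryRank (AddMonoidAlgebra.mapDomainRingHom R p) 0 ≤
        C.bdryRank (RingHom.id (AddMonoidAlgebra R (Fin n → ℤ))) 0 :=
      aux_rank_map_le (C.d 0) _ (aux_iota_injective n) _
    show C.c 0 - 0 - C.bdryRank (RingHom.id (AddMonoidAlgebra R (Fin n → ℤ))) 0 + q ≤
        C.c 0 - 0 - C.bdryRank (AddMonoidAlgebra.mapDomainRingHom R p) 0 ↔
        0 + C.bdryRank (AddMonoidAlgebra.mapDomainRingHom R p) 0 + q ≤
        0 + C.bdryRank (RingHom.id (AddMonoidAlgebra R (Fin n → ℤ))) 0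
    omega
  | succ k' =>
    obtain ⟨s, Gs, hfull, hiff⟩ := aux_main (R := R) (n := n) (C.d k') (C.d (k' + 1)) q hq
    refine ⟨s, Gs, hfull, fun m p => ?_⟩
    haveI : IsDomain (AddMonoidAlgebra R (Fin m → ℤ)) := aux_isDomain m
    rw [← hiff m p]
    have hprodι : (C.d k').map ⇑((algebraMap (AddMonoidAlgebra R (Fin n → ℤ))
          (FractionRing (AddMonoidAlgebra R (Fin n → ℤ)))).comp
          (RingHom.id (AddMonoidAlgebra R (Fin n → ℤ)))) *
        (C.d (k' + 1)).map ⇑((algebraMap (AddMonoidAlgebra R (Fin n → ℤ))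
          (FractionRing (AddMonoidAlgebra R (Fin n → ℤ)))).comp
          (RingHom.id (AddMonoidAlgebra R (Fin n → ℤ)))) = 0 := by
      rw [← Matrix.map_mul, C.dsq k', Matrix.map_zero _ (map_zero _)]
    have hprodψ : (C.d k').map ⇑((algebraMap (AddMonoidAlgebra R (Fin m → ℤ))
          (FractionRing (AddMonoidAlgebra R (Fin m → ℤ)))).comp
          (AddMonoidAlgebra.mapDomainRingHom R p)) *
        (C.d (k' + 1)).map ⇑((algebraMap (AddMonoidAlgebra R (Fin m → ℤ))
          (FractionRing (AddMonoidAlgebra R (Fin m → ℤ)))).comp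
          (AddMonoidAlgebra.mapDomainRingHom R p)) = 0 := by
      rw [← Matrix.map_mul, C.dsq k', Matrix.map_zero _ (map_zero _)]
    have hle1 : C.bdryRank (RingHom.id (AddMonoidAlgebra R (Fin n → ℤ))) k' +
        C.bdryRank (RingHom.id (AddMonoidAlgebra R (Fin n → ℤ))) (k' + 1) ≤ C.c (k' + 1) := by
      have := Matrix.rank_add_rank_le_card_of_mul_eq_zero hprodι
      simpa [FinFreeChainComplex.bdryRank] using this
    have hle2 : C.bdryRank (AddMonoidAlgebra.mapDomainRingHom R p) k' +
        C.bdryRank (AddMonoidAlgebra.mapDomainRingHom R p) (k' + 1) ≤ C.c (k' + 1) := by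
      have := Matrix.rank_add_rank_le_card_of_mul_eq_zero hprodψ
      simpa [FinFreeChainComplex.bdryRank] using this
    have hle3 : C.bdryRank (AddMonoidAlgebra.mapDomainRingHom R p) k' ≤
        C.bdryRank (RingHom.id (AddMonoidAlgebra R (Fin n → ℤ))) k' :=
      aux_rank_map_le (C.d k') _ (aux_iota_injective n) _
    have hle4 : C.bdryRank (AddMonoidAlgebra.mapDomainRingHom R p) (k' + 1) ≤
        C.bdryRank (RingHom.id (AddMonoidAlgebra R (Fin n → ℤ))) (k' + 1) :=
      aux_rank_map_le (C.d (k' + 1)) _ (aux_iota_injective n) _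
    show C.c (k' + 1) - C.bdryRank (RingHom.id (AddMonoidAlgebra R (Fin n → ℤ))) k' -
          C.bdryRank (RingHom.id (AddMonoidAlgebra R (Fin n → ℤ))) (k' + 1) + q ≤
        C.c (k' + 1) - C.bdryRank (AddMonoidAlgebra.mapDomainRingHom R p) k' -
          C.bdryRank (AddMonoidAlgebra.mapDomainRingHom R p) (k' + 1) ↔
        C.bdryRank (AddMonoidAlgebra.mapDomainRingHom R p) k' +
          C.bdryRank (AddMonoidAlgebra.mapDomainRingHom R p) (k' + 1) + q ≤
        C.bdryRank (RingHom.id (AddMonoidAlgebra R (Fin n → ℤ))) k' +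
          C.bdryRank (RingHom.id (AddMonoidAlgebra R (Fin n → ℤ))) (k' + 1)
    omega
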